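/- Let M_l, M_r ∈ ℝ^{n×n} be symmetric positive definite matrices, K_s, D_l, D_r > 0, and let the weights satisfy 2r₂ > r₁ > r₂ > 0 with p_U := (2r₂−r₁)/r₁ and p_F := (2r₂−r₁)/r₂. Consider the system on ℝ^{3n}: ė = v_l − v_r, v̇_l = −M_l^{-1}(K_s ⌈e⌋^{p_U} + D_l ⌈v_l⌋^{p_F}), v̇_r = −M_r^{-1}(−K_s ⌈e⌋^{p_U} + D_r ⌈v_r⌋^{p_F}). Then the origin (e, v_l, v_r) = 0 is globally asymptotically stable; in particular, along any solution the function V = (K_s/(p_U+1)) ∑_{k=1}^n |e_k|^{p_U+1} + ½ v_lᵀ M_l v_l + ½ v_rᵀ M_r v_r is nonincreasing and every solution converges to the origin as t → ∞. -/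

import Mathlib

open Matrix

/-- Signed power function: `⌈x⌋^p = |x|^p · sign(x)` with `sign 0 = 0`. -/
noncomputable def spow (p x : ℝ) : ℝ := |x| ^ p * Real.sign x

/-- `(e, vl, vr)` is a forward solution of the homogeneous approximation of the
closed loop with the state-feedback P+d controller C1, in error coordinates. -/
noncomputable def IsSolHomC1 (n : ℕ) (Ml Mr : Matrix (Fin n) (Fin n) ℝ)
    (Ks Dl Dr pU pF : ℝ) (e vl vr : ℝ → (Fin n → ℝ)) : Prop :=
  (∀ t : ℝ, 0 ≤ t → HasDerivAt e (vl t - vr t) t) ∧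
  (∀ t : ℝ, 0 ≤ t → HasDerivAt vl
    (-(Ml⁻¹ *ᵥ fun k => Ks * spow pU (e t k) + Dl * spow pF (vl t k))) t) ∧
  (∀ t : ℝ, 0 ≤ t → HasDerivAt vr
    (-(Mr⁻¹ *ᵥ fun k => -(Ks * spow pU (e t k)) + Dr * spow pF (vr t k))) t)

open Real Set Filter MeasureTheory intervalIntegral

lemma spow_zero (p : ℝ) : spow p 0 = 0 := by simp [spow, Real.sign_zero]
lemma abs_spow (p x : ℝ) (hp : 0 < p) : |spow p x| = |x| ^ p := by
  rcases eq_or_ne x 0 with rfl|h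
  · simp [spow, Real.zero_rpow hp.ne']
  · rw [spow, abs_mul, abs_of_nonneg (Real.rpow_nonneg (abs_nonneg x) p)]
    rcases lt_or_gt_of_ne h with h|h
    · rw [Real.sign_of_neg h]; simp
    · rw [Real.sign_of_pos h]; simp
lemma spow_eq (p x : ℝ) (hp : 0 < p) :
    spow p x = (max x 0) ^ p - (max (-x) 0) ^ p := by
  rcases lt_trichotomy x 0 with h|h|h
  · rw [spow, Real.sign_of_neg h, max_eq_right h.le, max_eq_left (by linarith),
      Real.zero_rpow hp.ne', abs_of_neg h]; ring
  · simp [h, spow, Real.zero_rpow hp.ne']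
  · rw [spow, Real.sign_of_pos h, max_eq_left h.le, max_eq_right (by linarith : -x ≤ 0),
      Real.zero_rpow hp.ne', abs_of_pos h]; ring
lemma continuous_spow (p : ℝ) (hp : 0 < p) : Continuous (spow p) := by
  have h1 : Continuous fun x : ℝ => (max x 0) ^ p :=
    Continuous.rpow_const (continuous_id.max continuous_const) (fun x => Or.inr hp.le)
  have h2 : Continuous fun x : ℝ => (max (-x) 0) ^ p :=
    Continuous.rpow_const (continuous_neg.max continuous_const) (fun x => Or.inr hp.le)
  have : (fun x => (max x 0) ^ p - (max (-x) 0) ^ p) = spow p := by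
    funext x; rw [spow_eq p x hp]
  rw [← this]; exact h1.sub h2
lemma spow_inv_spow (p x : ℝ) (hp : 0 < p) : spow p⁻¹ (spow p x) = x := by
  rcases lt_trichotomy x 0 with h|h|h
  · have hxp : (0:ℝ) < (-x) ^ p := Real.rpow_pos_of_pos (by linarith) p
    have h1 : spow p x = -((-x) ^ p) := by
      rw [spow, Real.sign_of_neg h, abs_of_neg h]; ring
    rw [h1, spow, abs_neg, abs_of_pos hxp, Real.sign_of_neg (by linarith : -((-x)^p) < 0),
      ← Real.rpow_mul (by linarith : (0:ℝ) ≤ -x), mul_inv_cancel₀ hp.ne', Real.rpow_one]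
    ring
  · simp [h, spow_zero]
  · have hxp : (0:ℝ) < x ^ p := Real.rpow_pos_of_pos h p
    have h1 : spow p x = x ^ p := by
      rw [spow, Real.sign_of_pos h, abs_of_pos h]; ring
    rw [h1, spow, abs_of_pos hxp, Real.sign_of_pos hxp,
      ← Real.rpow_mul h.le, mul_inv_cancel₀ hp.ne', Real.rpow_one]; ring


lemma mulVec_norm_bound {n : ℕ} (M : Matrix (Fin n) (Fin n) ℝ) :
    ∃ C : ℝ, 0 ≤ C ∧ ∀ u : Fin n → ℝ, ‖M *ᵥ u‖ ≤ C * ‖u‖ := by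
  let L := LinearMap.toContinuousLinearMap (Matrix.mulVecLin M)
  exact ⟨‖L‖, norm_nonneg L, fun u => L.le_opNorm u⟩

lemma continuous_quad {n : ℕ} (M : Matrix (Fin n) (Fin n) ℝ) :
    Continuous (fun v : Fin n → ℝ => v ⬝ᵥ M *ᵥ v) := by
  have h1 : Continuous (fun v : Fin n → ℝ => M *ᵥ v) :=
    (Matrix.mulVecLin M).continuous_of_finiteDimensional
  have : Continuous fun v : Fin n → ℝ => ∑ i, v i * (M *ᵥ v) i := by
    apply continuous_finset_sum; intro i _
    exact (continuous_apply i).mul ((continuous_apply i).comp h1)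
  simpa [dotProduct] using this

lemma quad_scale {n : ℕ} (M : Matrix (Fin n) (Fin n) ℝ) (r : ℝ) (u : Fin n → ℝ) :
    (r • u) ⬝ᵥ M *ᵥ (r • u) = r ^ 2 * (u ⬝ᵥ M *ᵥ u) := by
  rw [Matrix.mulVec_smul, smul_dotProduct, dotProduct_smul]
  simp [smul_eq_mul]; ring

lemma quad_bounds {n : ℕ} (M : Matrix (Fin n) (Fin n) ℝ) (hM : M.PosDef) :
    ∃ c C : ℝ, 0 < c ∧ 0 < C ∧ ∀ v : Fin n → ℝ,
      c * ‖v‖ ^ 2 ≤ v ⬝ᵥ M *ᵥ v ∧ v ⬝ᵥ M *ᵥ v ≤ C * ‖v‖ ^ 2 := by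
  rcases Nat.eq_zero_or_pos n with rfl|hn
  · refine ⟨1, 1, one_pos, one_pos, fun v => ?_⟩
    have hv : v = 0 := Subsingleton.elim _ _
    subst hv
    rw [show (0 : Fin 0 → ℝ) ⬝ᵥ M *ᵥ 0 = 0 by simp, norm_zero]
    norm_num
  · haveI : Nonempty (Fin n) := ⟨⟨0, hn⟩⟩
    have hS : (Metric.sphere (0 : Fin n → ℝ) 1).Nonempty :=
      NormedSpace.sphere_nonempty.2 zero_le_one
    have hcomp : IsCompact (Metric.sphere (0 : Fin n → ℝ) 1) := isCompact_sphere 0 1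
    obtain ⟨v0, hv0, hmin⟩ := hcomp.exists_isMinOn hS (continuous_quad M).continuousOn
    obtain ⟨v1, hv1, hmax⟩ := hcomp.exists_isMaxOn hS (continuous_quad M).continuousOn
    have hv0n : ‖v0‖ = 1 := by simpa using hv0
    have hv1n : ‖v1‖ = 1 := by simpa using hv1
    have hv0ne : v0 ≠ 0 := by intro h; rw [h] at hv0n; simp at hv0n
    have hv1ne : v1 ≠ 0 := by intro h; rw [h] at hv1n; simp at hv1n
    have hc : 0 < v0 ⬝ᵥ M *ᵥ v0 := hM.dotProduct_mulVec_pos hv0ne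
    have hC : 0 < v1 ⬝ᵥ M *ᵥ v1 := hM.dotProduct_mulVec_pos hv1ne
    refine ⟨_, _, hc, hC, fun v => ?_⟩
    rcases eq_or_ne v 0 with rfl|hv
    · simp
    · have hvn : 0 < ‖v‖ := norm_pos_iff.2 hv
      set u : Fin n → ℝ := ‖v‖⁻¹ • v with hu
      have hun : u ∈ Metric.sphere (0 : Fin n → ℝ) 1 := by
        simp [hu, norm_smul, abs_of_pos (inv_pos.2 hvn), inv_mul_cancel₀ hvn.ne']
      have hveq : v = ‖v‖ • u := by
        rw [hu, smul_smul, mul_inv_cancel₀ hvn.ne', one_smul]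
      have key : v ⬝ᵥ M *ᵥ v = ‖v‖ ^ 2 * (u ⬝ᵥ M *ᵥ u) := by
        conv_lhs => rw [hveq]
        exact quad_scale M _ u
      constructor
      · rw [key, mul_comm ((v0) ⬝ᵥ _) _]
        exact mul_le_mul_of_nonneg_left (hmin hun) (by positivity)
      · rw [key, mul_comm _ (‖v‖^2)]
        exact mul_le_mul_of_nonneg_left (hmax hun) (by positivity)

lemma mul_self_sign (x : ℝ) : x * Real.sign x = |x| := by
  rcases lt_trichotomy x 0 with h|h|h
  · rw [Real.sign_of_neg h, abs_of_neg h]; ring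
  · simp [h]
  · rw [Real.sign_of_pos h, abs_of_pos h]; ring

lemma mul_spow (p x : ℝ) (hp : 0 < p) : x * spow p x = |x| ^ (p + 1) := by
  rcases eq_or_ne x 0 with rfl|h
  · simp [spow, Real.zero_rpow (by positivity : p + 1 ≠ 0)]
  · rw [spow, ← mul_assoc, mul_comm x, mul_assoc, mul_self_sign,
      Real.rpow_add_one (abs_ne_zero.2 h)]

lemma hasDerivAt_abs_rpow_spow {q : ℝ} (hq : 1 < q) (x : ℝ) :
    HasDerivAt (fun y : ℝ => |y| ^ q) (q * spow (q - 1) x) x := by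
  have h := hasDerivAt_abs_rpow x hq
  convert h using 1
  rcases eq_or_ne x 0 with rfl|hx
  · simp [spow, Real.sign_zero]
  · rw [spow]
    have hxs : |x| * Real.sign x = x := by
      rcases lt_or_gt_of_ne hx with h'|h'
      · rw [Real.sign_of_neg h', abs_of_neg h']; ring
      · rw [Real.sign_of_pos h', abs_of_pos h']; ring
    have : |x| ^ (q - 2) * x = |x| ^ (q - 1) * Real.sign x := by
      calc |x| ^ (q - 2) * x = |x| ^ (q - 2) * (|x| * Real.sign x) := by rw [hxs]
        _ = (|x| ^ (q - 2) * |x| ^ (1:ℝ)) * Real.sign x := by rw [Real.rpow_one]; ring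
        _ = |x| ^ (q - 1) * Real.sign x := by
            rw [← Real.rpow_add (abs_pos.2 hx), show q - 2 + 1 = q - 1 by ring]
    rw [← this]; ring

lemma dot_symm {n : ℕ} (M : Matrix (Fin n) (Fin n) ℝ) (hsymm : Mᵀ = M)
    (a b : Fin n → ℝ) : a ⬝ᵥ M *ᵥ b = b ⬝ᵥ M *ᵥ a := by
  rw [Matrix.dotProduct_mulVec, ← hsymm, Matrix.vecMul_transpose, hsymm,
    dotProduct_comm]

lemma hasDerivAt_component {n : ℕ} (v : ℝ → Fin n → ℝ) (v' : Fin n → ℝ) (t : ℝ)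
    (hv : HasDerivAt v v' t) (k : Fin n) :
    HasDerivAt (fun s => v s k) (v' k) t := by
  have := (ContinuousLinearMap.proj (R := ℝ) (φ := fun _ : Fin n => ℝ) k).hasFDerivAt.comp_hasDerivAt t hv
  simpa [Function.comp_def] using this

lemma hasDerivAt_quad {n : ℕ} (M : Matrix (Fin n) (Fin n) ℝ) (hsymm : Mᵀ = M)
    (v : ℝ → Fin n → ℝ) (v' : Fin n → ℝ) (t : ℝ) (hv : HasDerivAt v v' t) :
    HasDerivAt (fun s => v s ⬝ᵥ M *ᵥ v s) (2 * (v t ⬝ᵥ M *ᵥ v')) t := by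
  have hcomp : ∀ k, HasDerivAt (fun s => v s k) (v' k) t :=
    hasDerivAt_component v v' t hv
  have hmv : ∀ i, HasDerivAt (fun s => (M *ᵥ v s) i) ((M *ᵥ v') i) t := by
    intro i
    have : HasDerivAt (fun s => ∑ j, M i j * v s j) (∑ j, M i j * v' j) t :=
      HasDerivAt.fun_sum (fun j _ => (hcomp j).const_mul (M i j))
    simpa [Matrix.mulVec, dotProduct] using this
  have hsum : HasDerivAt (fun s => ∑ i, v s i * (M *ᵥ v s) i)
      (∑ i, (v' i * (M *ᵥ v t) i + v t i * (M *ᵥ v') i)) t :=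
    HasDerivAt.fun_sum (fun i _ => (hcomp i).mul (hmv i))
  have heq : (∑ i, (v' i * (M *ᵥ v t) i + v t i * (M *ᵥ v') i)) = 2 * (v t ⬝ᵥ M *ᵥ v') := by
    rw [Finset.sum_add_distrib]
    have h1 : ∑ i, v' i * (M *ᵥ v t) i = v' ⬝ᵥ M *ᵥ v t := rfl
    have h2 : ∑ i, v t i * (M *ᵥ v') i = v t ⬝ᵥ M *ᵥ v' := rfl
    rw [h1, h2, dot_symm M hsymm v' (v t)]; ring
  rw [← heq]
  have : (fun s => v s ⬝ᵥ M *ᵥ v s) = fun s => ∑ i, v s i * (M *ᵥ v s) i := by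
    funext s; rfl
  rw [this]; exact hsum

section Vderiv
variable {n : ℕ} {Ml Mr : Matrix (Fin n) (Fin n) ℝ} {Ks Dl Dr pU pF : ℝ}
  {e vl vr : ℝ → Fin n → ℝ}

/-- derivative of the Lyapunov function along solutions -/
lemma V_hasDerivAt
    (hMl : Ml.PosDef) (hMr : Mr.PosDef) (hMl_symm : Mlᵀ = Ml) (hMr_symm : Mrᵀ = Mr)
    (hpU : 0 < pU) (hpF : 0 < pF)
    (hsol : IsSolHomC1 n Ml Mr Ks Dl Dr pU pF e vl vr)
    (t : ℝ) (ht : 0 ≤ t) :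
    HasDerivAt (fun s => (Ks / (pU + 1)) * (∑ k, |e s k| ^ (pU + 1))
        + (1 / 2 : ℝ) * (vl s ⬝ᵥ (Ml *ᵥ vl s)) + (1 / 2 : ℝ) * (vr s ⬝ᵥ (Mr *ᵥ vr s)))
      (-(Dl * ∑ k, |vl t k| ^ (pF + 1) + Dr * ∑ k, |vr t k| ^ (pF + 1))) t := by
  obtain ⟨he, hvl, hvr⟩ := hsol
  have hMlinv : Ml * Ml⁻¹ = 1 := Matrix.mul_nonsing_inv Ml hMl.det_pos.ne'.isUnit
  have hMrinv : Mr * Mr⁻¹ = 1 := Matrix.mul_nonsing_inv Mr hMr.det_pos.ne'.isUnit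
  set ul : Fin n → ℝ := fun k => Ks * spow pU (e t k) + Dl * spow pF (vl t k) with hul
  set ur : Fin n → ℝ := fun k => -(Ks * spow pU (e t k)) + Dr * spow pF (vr t k) with hur
  -- term 1
  have h1 : HasDerivAt (fun s => (Ks / (pU + 1)) * (∑ k, |e s k| ^ (pU + 1)))
      (Ks * ∑ k, spow pU (e t k) * (vl t k - vr t k)) t := by
    have hk : ∀ k, HasDerivAt (fun s => |e s k| ^ (pU + 1))
        ((pU + 1) * spow pU (e t k) * (vl t k - vr t k)) t := by
      intro k
      have hek : HasDerivAt (fun s => e s k) (vl t k - vr t k) t := by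
        simpa using hasDerivAt_component e (vl t - vr t) t (he t ht) k
      have := (hasDerivAt_abs_rpow_spow (q := pU + 1) (by linarith) (e t k)).comp t hek
      simpa [mul_assoc, Function.comp_def] using this
    have hsum := (HasDerivAt.fun_sum (fun k (_ : k ∈ Finset.univ) => hk k)).const_mul (Ks / (pU + 1))
    refine hsum.congr_deriv ?_
    rw [Finset.mul_sum, Finset.mul_sum]
    congr 1; funext k
    field_simp
  -- term 2
  have h2 : HasDerivAt (fun s => (1 / 2 : ℝ) * (vl s ⬝ᵥ (Ml *ᵥ vl s)))
      (-(vl t ⬝ᵥ ul)) t := by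
    have hq := (hasDerivAt_quad Ml hMl_symm vl _ t (hvl t ht)).const_mul (1 / 2 : ℝ)
    refine hq.congr_deriv ?_
    rw [Matrix.mulVec_neg, Matrix.mulVec_mulVec, hMlinv, Matrix.one_mulVec]
    rw [dotProduct_neg]
    ring
  have h3 : HasDerivAt (fun s => (1 / 2 : ℝ) * (vr s ⬝ᵥ (Mr *ᵥ vr s)))
      (-(vr t ⬝ᵥ ur)) t := by
    have hq := (hasDerivAt_quad Mr hMr_symm vr _ t (hvr t ht)).const_mul (1 / 2 : ℝ)
    refine hq.congr_deriv ?_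
    rw [Matrix.mulVec_neg, Matrix.mulVec_mulVec, hMrinv, Matrix.one_mulVec]
    rw [dotProduct_neg]
    ring
  have htot := (h1.add h2).add h3
  refine htot.congr_deriv ?_
  have hexp : Ks * ∑ k, spow pU (e t k) * (vl t k - vr t k) + -(vl t ⬝ᵥ ul) + -(vr t ⬝ᵥ ur)
      = ∑ k, (-(Dl * (vl t k * spow pF (vl t k))) + -(Dr * (vr t k * spow pF (vr t k)))) := by
    simp only [dotProduct, hul, hur, Finset.mul_sum, ← Finset.sum_neg_distrib,
      ← Finset.sum_add_distrib]
    congr 1; funext k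
    ring
  rw [hexp, Finset.sum_add_distrib]
  simp only [mul_spow _ _ hpF, Finset.sum_neg_distrib, ← Finset.mul_sum]
  ring


/-- Barbalat-type lemma: a nonneg, Lipschitz function on `[0,∞)` with bounded
integral tends to `0`. -/
lemma barbalat {g : ℝ → ℝ} {L B : ℝ} (hL : 0 < L)
    (hg0 : ∀ t, 0 ≤ t → 0 ≤ g t)
    (hgc : ContinuousOn g (Ici 0))
    (hlip : ∀ s t, 0 ≤ s → 0 ≤ t → |g t - g s| ≤ L * |t - s|)
    (hint : ∀ t, 0 ≤ t → ∫ s in (0:ℝ)..t, g s ≤ B) :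
    Tendsto g atTop (nhds 0) := by
  by_contra hcon
  rw [Metric.tendsto_atTop] at hcon
  push_neg at hcon
  obtain ⟨ε, hε, hfreq⟩ := hcon
  -- for every N there is t ≥ max N 0 with g t ≥ ε
  have hfreq' : ∀ N : ℝ, ∃ t, max N 0 ≤ t ∧ ε ≤ g t := by
    intro N
    obtain ⟨t, ht, hgt⟩ := hfreq (max N 0)
    refine ⟨t, ht, ?_⟩
    have ht0 : 0 ≤ t := le_trans (le_max_right N 0) ht
    have := hg0 t ht0
    rw [Real.dist_eq, sub_zero, abs_of_nonneg this] at hgt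
    linarith
  set d : ℝ := ε / (2 * L) with hd
  have hdpos : 0 < d := by positivity
  have hA : 0 < ε / 2 * d := by positivity
  -- on [t, t+d], g ≥ ε/2
  have hlower : ∀ t, 0 ≤ t → ε ≤ g t → ∀ s ∈ Icc t (t + d), ε / 2 ≤ g s := by
    intro t ht hgt s hs
    have hs0 : 0 ≤ s := le_trans ht hs.1
    have := hlip t s ht hs0
    have habs : |s - t| ≤ d := by
      rw [abs_of_nonneg (by linarith [hs.1])]
      linarith [hs.2]
    have : g t - g s ≤ L * d := by
      calc g t - g s ≤ |g s - g t| := by rw [abs_sub_comm]; exact le_abs_self _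
        _ ≤ L * |s - t| := hlip t s ht hs0
        _ ≤ L * d := by nlinarith
    have hLd : L * d = ε / 2 := by rw [hd]; field_simp
    linarith [hLd ▸ this]
  -- integrability
  have hinteg : ∀ a b : ℝ, 0 ≤ a → a ≤ b → IntervalIntegrable g volume a b := by
    intro a b ha hab
    apply ContinuousOn.intervalIntegrable
    apply hgc.mono
    rw [uIcc_of_le hab]
    intro x hx; exact le_trans ha hx.1
  -- accumulate area
  have key : ∀ m : ℕ, ∃ T : ℝ, 0 ≤ T ∧ (m : ℝ) * (ε / 2 * d) ≤ ∫ s in (0:ℝ)..T, g s := by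
    intro m
    induction m with
    | zero => exact ⟨0, le_refl 0, by simp⟩
    | succ m ih =>
      obtain ⟨T, hT0, hTint⟩ := ih
      obtain ⟨t, htT, hgt⟩ := hfreq' T
      have ht0 : 0 ≤ t := le_trans (le_max_right T 0) htT
      have htT' : T ≤ t := le_trans (le_max_left T 0) htT
      refine ⟨t + d, by linarith, ?_⟩
      have hsplit : ∫ s in (0:ℝ)..(t + d), g s
          = (∫ s in (0:ℝ)..T, g s) + ∫ s in T..(t + d), g s := by
        rw [integral_add_adjacent_intervals (hinteg 0 T (le_refl 0) hT0)
          (hinteg T (t + d) hT0 (by linarith))]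
      have hsplit2 : ∫ s in T..(t + d), g s
          = (∫ s in T..t, g s) + ∫ s in t..(t + d), g s := by
        rw [integral_add_adjacent_intervals (hinteg T t hT0 htT')
          (hinteg t (t + d) ht0 (by linarith))]
      have h1 : 0 ≤ ∫ s in T..t, g s := by
        apply integral_nonneg htT'
        intro s hs; exact hg0 s (le_trans hT0 hs.1)
      have h2 : ε / 2 * d ≤ ∫ s in t..(t + d), g s := by
        have := integral_mono_on (a := t) (b := t + d) (by linarith)
          (_root_.intervalIntegrable_const (c := ε / 2)) (hinteg t (t + d) ht0 (by linarith))
          (fun s hs => hlower t ht0 hgt s hs)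
        rw [intervalIntegral.integral_const] at this
        calc ε / 2 * d = (t + d - t) • (ε / 2) := by rw [smul_eq_mul]; ring
          _ ≤ ∫ s in t..(t + d), g s := this
      rw [hsplit, hsplit2]
      push_cast
      linarith
  obtain ⟨m, hm⟩ := exists_nat_gt (B / (ε / 2 * d))
  obtain ⟨T, hT0, hTint⟩ := key m
  have := hint T hT0
  have hmB : B < (m : ℝ) * (ε / 2 * d) := by
    rw [div_lt_iff₀ hA] at hm; linarith
  linarith


noncomputable def Vval {n : ℕ} (Ml Mr : Matrix (Fin n) (Fin n) ℝ) (Ks pU : ℝ)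
    (x : (Fin n → ℝ) × (Fin n → ℝ) × (Fin n → ℝ)) : ℝ :=
  (Ks / (pU + 1)) * (∑ k, |x.1 k| ^ (pU + 1))
    + (1 / 2 : ℝ) * (x.2.1 ⬝ᵥ (Ml *ᵥ x.2.1)) + (1 / 2 : ℝ) * (x.2.2 ⬝ᵥ (Mr *ᵥ x.2.2))

lemma continuous_Vval {n : ℕ} (Ml Mr : Matrix (Fin n) (Fin n) ℝ) (Ks pU : ℝ) (hpU : 0 < pU) :
    Continuous (Vval Ml Mr Ks pU) := by
  unfold Vval
  apply Continuous.add
  apply Continuous.add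
  · apply Continuous.mul continuous_const
    apply continuous_finset_sum; intro k _
    have : Continuous fun x : (Fin n → ℝ) × (Fin n → ℝ) × (Fin n → ℝ) => |x.1 k| := by
      exact (continuous_apply k).comp continuous_fst |>.abs
    exact Continuous.rpow_const this (fun x => Or.inr (by linarith))
  · exact continuous_const.mul ((continuous_quad Ml).comp (continuous_fst.comp continuous_snd))
  · exact continuous_const.mul ((continuous_quad Mr).comp (continuous_snd.comp continuous_snd))


lemma hasDerivAt_mulVec_component {n : ℕ} (M : Matrix (Fin n) (Fin n) ℝ)
    (v : ℝ → Fin n → ℝ) (v' : Fin n → ℝ) (t : ℝ) (hv : HasDerivAt v v' t) (i : Fin n) :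
    HasDerivAt (fun s => (M *ᵥ v s) i) ((M *ᵥ v') i) t := by
  have hcomp : ∀ k, HasDerivAt (fun s => v s k) (v' k) t := hasDerivAt_component v v' t hv
  have : HasDerivAt (fun s => ∑ j, M i j * v s j) (∑ j, M i j * v' j) t :=
    HasDerivAt.fun_sum (fun j _ => (hcomp j).const_mul (M i j))
  simpa [Matrix.mulVec, dotProduct] using this

lemma abs_le_of_rpow_le {q B x : ℝ} (hq : 0 < q) (h : |x| ^ q ≤ B) : |x| ≤ B ^ q⁻¹ := by
  have hB : 0 ≤ B := le_trans (Real.rpow_nonneg (abs_nonneg x) q) h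
  have h1 : (|x| ^ q) ^ q⁻¹ ≤ B ^ q⁻¹ :=
    Real.rpow_le_rpow (Real.rpow_nonneg (abs_nonneg x) q) h (by positivity)
  rwa [← Real.rpow_mul (abs_nonneg x), mul_inv_cancel₀ hq.ne', Real.rpow_one] at h1

lemma abs_rpow_sub_le {q R : ℝ} (hq : 1 < q) (hR : 0 ≤ R) {a b : ℝ}
    (ha : |a| ≤ R) (hb : |b| ≤ R) :
    abs (|a| ^ q - |b| ^ q) ≤ q * R ^ (q - 1) * |a - b| := by
  have hbound : ∀ x ∈ Icc (-R) R, ‖q * spow (q - 1) x‖ ≤ q * R ^ (q - 1) := by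
    intro x hx
    rw [Real.norm_eq_abs, abs_mul, abs_of_pos (by linarith : (0:ℝ) < q),
      abs_spow _ _ (by linarith)]
    have : |x| ^ (q - 1) ≤ R ^ (q - 1) :=
      Real.rpow_le_rpow (abs_nonneg x) (abs_le.2 ⟨hx.1, hx.2⟩) (by linarith)
    nlinarith
  have := Convex.norm_image_sub_le_of_norm_hasDerivWithin_le
    (f := fun x : ℝ => |x| ^ q) (f' := fun x => q * spow (q - 1) x) (s := Icc (-R) R)
    (fun x _ => (hasDerivAt_abs_rpow_spow hq x).hasDerivWithinAt)
    hbound (convex_Icc _ _) (abs_le.1 hb) (abs_le.1 ha)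
  simpa [Real.norm_eq_abs] using this

lemma tendsto_integral_window {f : ℝ → ℝ} (hfc : ContinuousOn f (Ici 0))
    (hf : Filter.Tendsto f Filter.atTop (nhds 0)) :
    Filter.Tendsto (fun t => ∫ s in t..(t+1), f s) Filter.atTop (nhds 0) := by
  rw [Metric.tendsto_atTop] at hf ⊢
  intro ε hε
  obtain ⟨N, hN⟩ := hf (ε / 2) (by linarith)
  refine ⟨max N 0, fun t ht => ?_⟩
  have htN : N ≤ t := le_trans (le_max_left _ _) ht
  have ht0 : 0 ≤ t := le_trans (le_max_right _ _) ht
  rw [Real.dist_eq, sub_zero]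
  have hb : ∀ x ∈ Set.uIoc t (t+1), ‖f x‖ ≤ ε / 2 := by
    intro x hx
    rw [Set.mem_uIoc] at hx
    have hxt : t ≤ x := by rcases hx with ⟨h1, _⟩|⟨h1, h2⟩ <;> [exact h1.le; linarith]
    have := hN x (le_trans htN hxt)
    rw [Real.dist_eq, sub_zero] at this
    exact le_of_lt this
  have := intervalIntegral.norm_integral_le_of_norm_le_const hb
  rw [Real.norm_eq_abs] at this
  calc |∫ s in t..(t+1), f s| ≤ ε / 2 * |t + 1 - t| := this
    _ ≤ ε / 2 := by norm_num
    _ < ε := by linarith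

section Traj
variable {n : ℕ} {Ml Mr : Matrix (Fin n) (Fin n) ℝ} {Ks Dl Dr pU pF : ℝ}
  {e vl vr : ℝ → Fin n → ℝ}

lemma V_antitone
    (hMl : Ml.PosDef) (hMr : Mr.PosDef) (hMl_symm : Mlᵀ = Ml) (hMr_symm : Mrᵀ = Mr)
    (hDl : 0 < Dl) (hDr : 0 < Dr) (hpU : 0 < pU) (hpF : 0 < pF)
    (hsol : IsSolHomC1 n Ml Mr Ks Dl Dr pU pF e vl vr) :
    AntitoneOn (fun t => Vval Ml Mr Ks pU (e t, vl t, vr t)) (Ici 0) := by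
  have hV : ∀ t, 0 ≤ t → HasDerivAt (fun s => Vval Ml Mr Ks pU (e s, vl s, vr s))
      (-(Dl * ∑ k, |vl t k| ^ (pF + 1) + Dr * ∑ k, |vr t k| ^ (pF + 1))) t :=
    fun t ht => V_hasDerivAt hMl hMr hMl_symm hMr_symm hpU hpF hsol t ht
  apply antitoneOn_of_deriv_nonpos (convex_Ici 0)
  · exact fun t ht => (hV t ht).continuousAt.continuousWithinAt
  · intro t ht
    rw [interior_Ici] at ht
    exact (hV t (le_of_lt ht)).differentiableAt.differentiableWithinAt
  · intro t ht
    rw [interior_Ici] at ht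
    rw [(hV t (le_of_lt ht)).deriv]
    have h1 : (0:ℝ) ≤ ∑ k, |vl t k| ^ (pF + 1) :=
      Finset.sum_nonneg fun k _ => Real.rpow_nonneg (abs_nonneg _) _
    have h2 : (0:ℝ) ≤ ∑ k, |vr t k| ^ (pF + 1) :=
      Finset.sum_nonneg fun k _ => Real.rpow_nonneg (abs_nonneg _) _
    nlinarith

lemma Vval_nonneg (hMl : Ml.PosDef) (hMr : Mr.PosDef) (hKs : 0 < Ks) (hpU : 0 < pU)
    (x : (Fin n → ℝ) × (Fin n → ℝ) × (Fin n → ℝ)) : 0 ≤ Vval Ml Mr Ks pU x := by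
  obtain ⟨cl, Cl, hcl, hCl, hqMl⟩ := quad_bounds Ml hMl
  obtain ⟨cr, Cr, hcr, hCr, hqMr⟩ := quad_bounds Mr hMr
  unfold Vval
  have h1 : (0:ℝ) ≤ ∑ k, |x.1 k| ^ (pU + 1) :=
    Finset.sum_nonneg fun k _ => Real.rpow_nonneg (abs_nonneg _) _
  have h2 : 0 ≤ x.2.1 ⬝ᵥ Ml *ᵥ x.2.1 :=
    le_trans (by positivity) (hqMl x.2.1).1
  have h3 : 0 ≤ x.2.2 ⬝ᵥ Mr *ᵥ x.2.2 :=
    le_trans (by positivity) (hqMr x.2.2).1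
  have h0 : (0:ℝ) ≤ Ks / (pU + 1) := by positivity
  nlinarith

end Traj
section Traj2
variable {n : ℕ} {Ml Mr : Matrix (Fin n) (Fin n) ℝ} {Ks Dl Dr pU pF : ℝ}
  {e vl vr : ℝ → Fin n → ℝ}

set_option maxHeartbeats 2000000 in
lemma trajectory_tendsto
    (hMl : Ml.PosDef) (hMr : Mr.PosDef) (hMl_symm : Mlᵀ = Ml) (hMr_symm : Mrᵀ = Mr)
    (hKs : 0 < Ks) (hDl : 0 < Dl) (hDr : 0 < Dr) (hpU : 0 < pU) (hpF : 0 < pF)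
    (hsol : IsSolHomC1 n Ml Mr Ks Dl Dr pU pF e vl vr) :
    Filter.Tendsto (fun t => (e t, vl t, vr t)) Filter.atTop (nhds (0, 0, 0)) := by
  obtain ⟨he, hvl, hvr⟩ := hsol
  obtain ⟨cl, Cl, hcl, hCl, hqMl⟩ := quad_bounds Ml hMl
  obtain ⟨cr, Cr, hcr, hCr, hqMr⟩ := quad_bounds Mr hMr
  set V : ℝ → ℝ := fun t => Vval Ml Mr Ks pU (e t, vl t, vr t) with hVdef
  have hmono : AntitoneOn V (Ici 0) :=
    V_antitone hMl hMr hMl_symm hMr_symm hDl hDr hpU hpF ⟨he, hvl, hvr⟩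
  have hVle : ∀ t, 0 ≤ t → V t ≤ V 0 := fun t ht => hmono self_mem_Ici ht ht
  have hVnn : ∀ t, 0 ≤ V t := fun t => Vval_nonneg hMl hMr hKs hpU _
  -- the three terms of V
  have hsum_e_nn : ∀ t, (0:ℝ) ≤ ∑ k, |e t k| ^ (pU + 1) :=
    fun t => Finset.sum_nonneg fun k _ => Real.rpow_nonneg (abs_nonneg _) _
  have hquadl_nn : ∀ t, 0 ≤ vl t ⬝ᵥ Ml *ᵥ vl t :=
    fun t => le_trans (by positivity) (hqMl (vl t)).1
  have hquadr_nn : ∀ t, 0 ≤ vr t ⬝ᵥ Mr *ᵥ vr t :=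
    fun t => le_trans (by positivity) (hqMr (vr t)).1
  have hVsplit : ∀ t, V t = (Ks / (pU + 1)) * (∑ k, |e t k| ^ (pU + 1))
      + (1 / 2 : ℝ) * (vl t ⬝ᵥ (Ml *ᵥ vl t)) + (1 / 2 : ℝ) * (vr t ⬝ᵥ (Mr *ᵥ vr t)) :=
    fun t => rfl
  -- uniform bounds on trajectory
  set Re : ℝ := ((pU + 1) * V 0 / Ks) ^ (pU + 1)⁻¹ with hRe_def
  have hRe0 : 0 ≤ Re := Real.rpow_nonneg (div_nonneg (mul_nonneg (by linarith) (hVnn 0)) hKs.le) _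
  have hE : ∀ t, 0 ≤ t → ∀ k, |e t k| ≤ Re := by
    intro t ht k
    have h1 : (Ks / (pU + 1)) * (∑ j, |e t j| ^ (pU + 1)) ≤ V 0 := by
      have := hVle t ht
      rw [hVsplit t] at this
      nlinarith [hquadl_nn t, hquadr_nn t]
    have hp1 : (0:ℝ) < pU + 1 := by linarith
    have h2 : (∑ j, |e t j| ^ (pU + 1)) ≤ (pU + 1) * V 0 / Ks := by
      rw [le_div_iff₀ hKs]
      have h1' : Ks / (pU + 1) * (∑ j, |e t j| ^ (pU + 1)) * (pU + 1) ≤ V 0 * (pU + 1) :=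
        mul_le_mul_of_nonneg_right h1 hp1.le
      have heq : Ks / (pU + 1) * (∑ j, |e t j| ^ (pU + 1)) * (pU + 1)
          = Ks * (∑ j, |e t j| ^ (pU + 1)) := by field_simp
      rw [heq] at h1'
      linarith
    have h3 : |e t k| ^ (pU + 1) ≤ (pU + 1) * V 0 / Ks :=
      le_trans (Finset.single_le_sum (f := fun j => |e t j| ^ (pU + 1))
        (fun j _ => Real.rpow_nonneg (abs_nonneg _) _) (Finset.mem_univ k)) h2
    exact abs_le_of_rpow_le (by linarith) h3
  have hEnorm : ∀ t, 0 ≤ t → ‖e t‖ ≤ Re := by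
    intro t ht
    rw [pi_norm_le_iff_of_nonneg hRe0]
    intro k; rw [Real.norm_eq_abs]; exact hE t ht k
  set Rl : ℝ := Real.sqrt (2 * V 0 / cl) with hRl_def
  set Rr : ℝ := Real.sqrt (2 * V 0 / cr) with hRr_def
  have hRl0 : 0 ≤ Rl := Real.sqrt_nonneg _
  have hRr0 : 0 ≤ Rr := Real.sqrt_nonneg _
  have hVlnorm : ∀ t, 0 ≤ t → ‖vl t‖ ≤ Rl := by
    intro t ht
    have h1 : vl t ⬝ᵥ Ml *ᵥ vl t ≤ 2 * V 0 := by
      have := hVle t ht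
      rw [hVsplit t] at this
      nlinarith [hquadr_nn t, hsum_e_nn t, (by positivity : (0:ℝ) ≤ Ks / (pU+1))]
    have h2 : ‖vl t‖ ^ 2 ≤ 2 * V 0 / cl := by
      rw [le_div_iff₀ hcl]
      nlinarith [(hqMl (vl t)).1]
    calc ‖vl t‖ = Real.sqrt (‖vl t‖ ^ 2) := (Real.sqrt_sq (norm_nonneg _)).symm
      _ ≤ Rl := Real.sqrt_le_sqrt h2
  have hVrnorm : ∀ t, 0 ≤ t → ‖vr t‖ ≤ Rr := by
    intro t ht
    have h1 : vr t ⬝ᵥ Mr *ᵥ vr t ≤ 2 * V 0 := by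
      have := hVle t ht
      rw [hVsplit t] at this
      nlinarith [hquadl_nn t, hsum_e_nn t, (by positivity : (0:ℝ) ≤ Ks / (pU+1))]
    have h2 : ‖vr t‖ ^ 2 ≤ 2 * V 0 / cr := by
      rw [le_div_iff₀ hcr]
      nlinarith [(hqMr (vr t)).1]
    calc ‖vr t‖ = Real.sqrt (‖vr t‖ ^ 2) := (Real.sqrt_sq (norm_nonneg _)).symm
      _ ≤ Rr := Real.sqrt_le_sqrt h2
  -- continuity of trajectory components on [0, ∞)
  have hecont : ContinuousOn e (Ici 0) := fun t ht => (he t ht).continuousAt.continuousWithinAt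
  have hvlcont : ContinuousOn vl (Ici 0) := fun t ht => (hvl t ht).continuousAt.continuousWithinAt
  have hvrcont : ContinuousOn vr (Ici 0) := fun t ht => (hvr t ht).continuousAt.continuousWithinAt
  have heck : ∀ k, ContinuousOn (fun t => e t k) (Ici 0) :=
    fun k => (continuous_apply k).comp_continuousOn hecont
  have hvlck : ∀ k, ContinuousOn (fun t => vl t k) (Ici 0) :=
    fun k => (continuous_apply k).comp_continuousOn hvlcont
  have hvrck : ∀ k, ContinuousOn (fun t => vr t k) (Ici 0) :=
    fun k => (continuous_apply k).comp_continuousOn hvrcont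
  have habs_cont : ∀ q : ℝ, 0 ≤ q → Continuous (fun x : ℝ => |x| ^ q) :=
    fun q hq => Continuous.rpow_const continuous_abs (fun x => Or.inr hq)
  -- the dissipation function W
  set W : ℝ → ℝ := fun t => Dl * ∑ k, |vl t k| ^ (pF + 1) + Dr * ∑ k, |vr t k| ^ (pF + 1)
    with hWdef
  have hWnn : ∀ t, 0 ≤ t → 0 ≤ W t := by
    intro t ht
    have h1 : (0:ℝ) ≤ ∑ k, |vl t k| ^ (pF + 1) :=
      Finset.sum_nonneg fun k _ => Real.rpow_nonneg (abs_nonneg _) _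
    have h2 : (0:ℝ) ≤ ∑ k, |vr t k| ^ (pF + 1) :=
      Finset.sum_nonneg fun k _ => Real.rpow_nonneg (abs_nonneg _) _
    have := hDl.le; have := hDr.le
    positivity
  have hWcont : ContinuousOn W (Ici 0) := by
    apply ContinuousOn.add
    · apply ContinuousOn.mul continuousOn_const
      apply continuousOn_finset_sum
      intro k _
      exact (habs_cont (pF+1) (by linarith)).comp_continuousOn (hvlck k)
    · apply ContinuousOn.mul continuousOn_const
      apply continuousOn_finset_sum
      intro k _
      exact (habs_cont (pF+1) (by linarith)).comp_continuousOn (hvrck k)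
  have hhd : ∀ t, 0 ≤ t → HasDerivAt V (-W t) t :=
    fun t ht => V_hasDerivAt hMl hMr hMl_symm hMr_symm hpU hpF ⟨he, hvl, hvr⟩ t ht
  -- FTC bound on the integral of W
  have hWint : ∀ t, 0 ≤ t → ∫ s in (0:ℝ)..t, W s ≤ V 0 := by
    intro t ht
    have hW_ii : IntervalIntegrable W volume 0 t := by
      apply ContinuousOn.intervalIntegrable
      apply hWcont.mono
      rw [uIcc_of_le ht]
      exact fun x hx => hx.1
    have hftc : ∫ s in (0:ℝ)..t, -W s = V t - V 0 := by
      apply intervalIntegral.integral_eq_sub_of_hasDerivAt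
      · intro x hx
        rw [uIcc_of_le ht] at hx
        exact hhd x hx.1
      · exact hW_ii.neg
    rw [intervalIntegral.integral_neg] at hftc
    have := hVnn t
    linarith [hftc]
  -- Lipschitz bounds
  obtain ⟨Cil, hCil0, hCil⟩ := mulVec_norm_bound (Ml⁻¹)
  obtain ⟨Cir, hCir0, hCir⟩ := mulVec_norm_bound (Mr⁻¹)
  have hRepU : (0:ℝ) ≤ Re ^ pU := Real.rpow_nonneg hRe0 _
  have hRlpF : (0:ℝ) ≤ Rl ^ pF := Real.rpow_nonneg hRl0 _
  have hRrpF : (0:ℝ) ≤ Rr ^ pF := Real.rpow_nonneg hRr0 _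
  set Ul : ℝ := Ks * Re ^ pU + Dl * Rl ^ pF with hUl_def
  set Ur : ℝ := Ks * Re ^ pU + Dr * Rr ^ pF with hUr_def
  have hUl0 : 0 ≤ Ul := by
    have := hKs.le; have := hDl.le; positivity
  have hUr0 : 0 ≤ Ur := by
    have := hKs.le; have := hDr.le; positivity
  have hcomp_vl : ∀ t k, 0 ≤ t → |vl t k| ≤ Rl := by
    intro t k ht
    have := norm_le_pi_norm (vl t) k
    rw [Real.norm_eq_abs] at this
    exact this.trans (hVlnorm t ht)
  have hcomp_vr : ∀ t k, 0 ≤ t → |vr t k| ≤ Rr := by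
    intro t k ht
    have := norm_le_pi_norm (vr t) k
    rw [Real.norm_eq_abs] at this
    exact this.trans (hVrnorm t ht)
  have hulb : ∀ t, 0 ≤ t →
      ‖(fun k => Ks * spow pU (e t k) + Dl * spow pF (vl t k))‖ ≤ Ul := by
    intro t ht
    rw [pi_norm_le_iff_of_nonneg hUl0]
    intro k
    rw [Real.norm_eq_abs]
    calc |Ks * spow pU (e t k) + Dl * spow pF (vl t k)|
        ≤ |Ks * spow pU (e t k)| + |Dl * spow pF (vl t k)| := abs_add_le _ _
      _ = Ks * |e t k| ^ pU + Dl * |vl t k| ^ pF := by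
          rw [abs_mul, abs_mul, abs_of_pos hKs, abs_of_pos hDl,
            abs_spow _ _ hpU, abs_spow _ _ hpF]
      _ ≤ Ul := by
          rw [hUl_def]
          have h1 : |e t k| ^ pU ≤ Re ^ pU :=
            Real.rpow_le_rpow (abs_nonneg _) (hE t ht k) hpU.le
          have h2 : |vl t k| ^ pF ≤ Rl ^ pF :=
            Real.rpow_le_rpow (abs_nonneg _) (hcomp_vl t k ht) hpF.le
          nlinarith
  have hurb : ∀ t, 0 ≤ t →
      ‖(fun k => -(Ks * spow pU (e t k)) + Dr * spow pF (vr t k))‖ ≤ Ur := by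
    intro t ht
    rw [pi_norm_le_iff_of_nonneg hUr0]
    intro k
    rw [Real.norm_eq_abs]
    calc |-(Ks * spow pU (e t k)) + Dr * spow pF (vr t k)|
        ≤ |-(Ks * spow pU (e t k))| + |Dr * spow pF (vr t k)| := abs_add_le _ _
      _ = Ks * |e t k| ^ pU + Dr * |vr t k| ^ pF := by
          rw [abs_neg, abs_mul, abs_mul, abs_of_pos hKs, abs_of_pos hDr,
            abs_spow _ _ hpU, abs_spow _ _ hpF]
      _ ≤ Ur := by
          rw [hUr_def]
          have h1 : |e t k| ^ pU ≤ Re ^ pU :=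
            Real.rpow_le_rpow (abs_nonneg _) (hE t ht k) hpU.le
          have h2 : |vr t k| ^ pF ≤ Rr ^ pF :=
            Real.rpow_le_rpow (abs_nonneg _) (hcomp_vr t k ht) hpF.le
          nlinarith
  set Kl : ℝ := Cil * Ul with hKl_def
  set Kr : ℝ := Cir * Ur with hKr_def
  have hKl0 : 0 ≤ Kl := mul_nonneg hCil0 hUl0
  have hKr0 : 0 ≤ Kr := mul_nonneg hCir0 hUr0
  have hvl'b : ∀ τ, 0 ≤ τ →
      ‖-(Ml⁻¹ *ᵥ fun k => Ks * spow pU (e τ k) + Dl * spow pF (vl τ k))‖ ≤ Kl := by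
    intro τ hτ
    rw [norm_neg]
    exact le_trans (hCil _) (mul_le_mul_of_nonneg_left (hulb τ hτ) hCil0)
  have hvr'b : ∀ τ, 0 ≤ τ →
      ‖-(Mr⁻¹ *ᵥ fun k => -(Ks * spow pU (e τ k)) + Dr * spow pF (vr τ k))‖ ≤ Kr := by
    intro τ hτ
    rw [norm_neg]
    exact le_trans (hCir _) (mul_le_mul_of_nonneg_left (hurb τ hτ) hCir0)
  have hvlLip : ∀ s t, 0 ≤ s → 0 ≤ t → ‖vl t - vl s‖ ≤ Kl * |t - s| := by
    intro s t hs ht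
    have := Convex.norm_image_sub_le_of_norm_hasDerivWithin_le (𝕜 := ℝ)
      (f := vl)
      (f' := fun τ => -(Ml⁻¹ *ᵥ fun k => Ks * spow pU (e τ k) + Dl * spow pF (vl τ k)))
      (s := Ici 0) (fun τ hτ => (hvl τ hτ).hasDerivWithinAt)
      (fun τ hτ => hvl'b τ hτ) (convex_Ici 0) hs ht
    simpa [Real.norm_eq_abs] using this
  have hvrLip : ∀ s t, 0 ≤ s → 0 ≤ t → ‖vr t - vr s‖ ≤ Kr * |t - s| := by
    intro s t hs ht
    have := Convex.norm_image_sub_le_of_norm_hasDerivWithin_le (𝕜 := ℝ)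
      (f := vr)
      (f' := fun τ => -(Mr⁻¹ *ᵥ fun k => -(Ks * spow pU (e τ k)) + Dr * spow pF (vr τ k)))
      (s := Ici 0) (fun τ hτ => (hvr τ hτ).hasDerivWithinAt)
      (fun τ hτ => hvr'b τ hτ) (convex_Ici 0) hs ht
    simpa [Real.norm_eq_abs] using this
  -- W is Lipschitz on [0, ∞)
  set LW : ℝ := Dl * n * ((pF+1) * Rl ^ pF * Kl) + Dr * n * ((pF+1) * Rr ^ pF * Kr)
    with hLW_def
  have hLW0 : 0 ≤ LW := by
    have h1 : (0:ℝ) ≤ (n:ℝ) := Nat.cast_nonneg n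
    have := hDl.le; have := hDr.le
    have h2 : (0:ℝ) ≤ (pF+1) * Rl ^ pF * Kl := by positivity
    have h3 : (0:ℝ) ≤ (pF+1) * Rr ^ pF * Kr := by positivity
    positivity
  have hWlip : ∀ s t, 0 ≤ s → 0 ≤ t → |W t - W s| ≤ LW * |t - s| := by
    intro s t hs ht
    have hsum : ∀ (v : ℝ → Fin n → ℝ) (Rv Kv : ℝ), 0 ≤ Rv → 0 ≤ Kv →
        (∀ τ k, 0 ≤ τ → |v τ k| ≤ Rv) →
        (∀ s t, 0 ≤ s → 0 ≤ t → ‖v t - v s‖ ≤ Kv * |t - s|) →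
        |(∑ k, |v t k| ^ (pF+1)) - ∑ k, |v s k| ^ (pF+1)|
          ≤ n * ((pF+1) * Rv ^ pF * (Kv * |t - s|)) := by
      intro v Rv Kv hRv hKv hvb hvlip
      rw [← Finset.sum_sub_distrib]
      refine le_trans (Finset.abs_sum_le_sum_abs _ _) ?_
      have hk : ∀ k ∈ Finset.univ, abs (|v t k| ^ (pF+1) - |v s k| ^ (pF+1))
          ≤ (pF+1) * Rv ^ pF * (Kv * |t - s|) := by
        intro k _
        have h2 := abs_rpow_sub_le (q := pF+1) (by linarith) hRv
          (hvb t k ht) (hvb s k hs)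
        rw [show pF + 1 - 1 = pF by ring] at h2
        refine h2.trans ?_
        have h3 : |v t k - v s k| ≤ Kv * |t - s| := by
          have h4 := norm_le_pi_norm (v t - v s) k
          rw [Real.norm_eq_abs, Pi.sub_apply] at h4
          exact h4.trans (hvlip s t hs ht)
        exact mul_le_mul_of_nonneg_left h3
          (mul_nonneg (by linarith) (Real.rpow_nonneg hRv _))
      refine le_trans (Finset.sum_le_card_nsmul _ _ _ hk) ?_
      simp [Finset.card_univ]
    have h1 := hsum vl Rl Kl hRl0 hKl0 (fun τ k hτ => hcomp_vl τ k hτ) hvlLip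
    have h2 := hsum vr Rr Kr hRr0 hKr0 (fun τ k hτ => hcomp_vr τ k hτ) hvrLip
    have hWts : W t - W s = Dl * ((∑ k, |vl t k| ^ (pF+1)) - ∑ k, |vl s k| ^ (pF+1))
        + Dr * ((∑ k, |vr t k| ^ (pF+1)) - ∑ k, |vr s k| ^ (pF+1)) := by
      rw [hWdef]; ring
    calc |W t - W s| ≤ Dl * |(∑ k, |vl t k| ^ (pF+1)) - ∑ k, |vl s k| ^ (pF+1)|
          + Dr * |(∑ k, |vr t k| ^ (pF+1)) - ∑ k, |vr s k| ^ (pF+1)| := by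
          rw [hWts]
          refine le_trans (abs_add_le _ _) ?_
          rw [abs_mul, abs_mul, abs_of_pos hDl, abs_of_pos hDr]
      _ ≤ Dl * ((n:ℝ) * ((pF+1) * Rl ^ pF * (Kl * |t - s|)))
          + Dr * ((n:ℝ) * ((pF+1) * Rr ^ pF * (Kr * |t - s|))) := by
          have := mul_le_mul_of_nonneg_left h1 hDl.le
          have := mul_le_mul_of_nonneg_left h2 hDr.le
          linarith
      _ = LW * |t - s| := by rw [hLW_def]; ring
  -- Barbalat: W → 0
  have hWto0 : Filter.Tendsto W Filter.atTop (nhds 0) := by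
    apply barbalat (L := LW + 1) (B := V 0) (by linarith) hWnn hWcont
    · intro s t hs ht
      refine (hWlip s t hs ht).trans ?_
      have := abs_nonneg (t - s)
      nlinarith
    · exact hWint
  -- velocity components tend to zero
  have hsqueeze : ∀ (v : ℝ → Fin n → ℝ) (Dv : ℝ), 0 < Dv →
      (∀ t, 0 ≤ t → ∀ k, Dv * |v t k| ^ (pF+1) ≤ W t) →
      ∀ k, Filter.Tendsto (fun t => v t k) Filter.atTop (nhds 0) := by
    intro v Dv hDv hb k
    have hbound : ∀ᶠ t in Filter.atTop, ‖v t k‖ ≤ (W t / Dv) ^ (pF+1)⁻¹ := by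
      filter_upwards [Filter.eventually_ge_atTop (0:ℝ)] with t ht
      rw [Real.norm_eq_abs]
      apply abs_le_of_rpow_le (by linarith : (0:ℝ) < pF + 1)
      rw [le_div_iff₀ hDv, mul_comm]
      exact hb t ht k
    have hca : ContinuousAt (fun y : ℝ => (y / Dv) ^ (pF+1)⁻¹) 0 :=
      ContinuousAt.rpow_const (continuousAt_id.div_const Dv) (Or.inr (by positivity))
    have hg : Filter.Tendsto (fun t => (W t / Dv) ^ (pF+1)⁻¹) Filter.atTop (nhds 0) := by
      have := hca.tendsto.comp hWto0
      simpa [Function.comp_def, zero_div, Real.zero_rpow (by positivity : ((pF:ℝ)+1)⁻¹ ≠ 0)] using this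
    exact squeeze_zero_norm' hbound hg
  have hvlk : ∀ k, Filter.Tendsto (fun t => vl t k) Filter.atTop (nhds 0) := by
    apply hsqueeze vl Dl hDl
    intro t ht k
    have h1 : |vl t k| ^ (pF+1) ≤ ∑ j, |vl t j| ^ (pF+1) :=
      Finset.single_le_sum (f := fun j => |vl t j| ^ (pF+1))
        (fun j _ => Real.rpow_nonneg (abs_nonneg _) _) (Finset.mem_univ k)
    have h2 : (0:ℝ) ≤ ∑ j, |vr t j| ^ (pF+1) :=
      Finset.sum_nonneg fun j _ => Real.rpow_nonneg (abs_nonneg _) _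
    have h3 := mul_le_mul_of_nonneg_left h1 hDl.le
    have h4 := mul_nonneg hDr.le h2
    simp only [hWdef]
    linarith
  have hvrk : ∀ k, Filter.Tendsto (fun t => vr t k) Filter.atTop (nhds 0) := by
    apply hsqueeze vr Dr hDr
    intro t ht k
    have h1 : |vr t k| ^ (pF+1) ≤ ∑ j, |vr t j| ^ (pF+1) :=
      Finset.single_le_sum (f := fun j => |vr t j| ^ (pF+1))
        (fun j _ => Real.rpow_nonneg (abs_nonneg _) _) (Finset.mem_univ k)
    have h2 : (0:ℝ) ≤ ∑ j, |vl t j| ^ (pF+1) :=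
      Finset.sum_nonneg fun j _ => Real.rpow_nonneg (abs_nonneg _) _
    have h3 := mul_le_mul_of_nonneg_left h1 hDr.le
    have h4 := mul_nonneg hDl.le h2
    simp only [hWdef]
    linarith
  -- position components tend to zero
  have hMlinv : Ml * Ml⁻¹ = 1 := Matrix.mul_nonsing_inv Ml hMl.det_pos.ne'.isUnit
  have hek : ∀ k, Filter.Tendsto (fun t => e t k) Filter.atTop (nhds 0) := by
    intro k
    set z : ℝ → ℝ := fun t => (Ml *ᵥ vl t) k with hz_def
    have hz' : ∀ τ, 0 ≤ τ →
        HasDerivAt z (-(Ks * spow pU (e τ k) + Dl * spow pF (vl τ k))) τ := by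
      intro τ hτ
      have h := hasDerivAt_mulVec_component Ml vl _ τ (hvl τ hτ) k
      have heq : Ml *ᵥ (-(Ml⁻¹ *ᵥ fun j => Ks * spow pU (e τ j) + Dl * spow pF (vl τ j)))
          = -(fun j => Ks * spow pU (e τ j) + Dl * spow pF (vl τ j)) := by
        rw [Matrix.mulVec_neg, Matrix.mulVec_mulVec, hMlinv, Matrix.one_mulVec]
      rw [heq] at h
      simpa using h
    have hintc : ContinuousOn (fun τ => Ks * spow pU (e τ k) + Dl * spow pF (vl τ k))
        (Ici 0) :=
      (continuousOn_const.mul ((continuous_spow pU hpU).comp_continuousOn (heck k))).add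
        (continuousOn_const.mul ((continuous_spow pF hpF).comp_continuousOn (hvlck k)))
    have hsub : ∀ t : ℝ, 0 ≤ t → uIcc t (t+1) ⊆ Ici 0 := by
      intro t ht
      rw [uIcc_of_le (by linarith)]
      exact fun x hx => le_trans ht hx.1
    have hia : ∀ t : ℝ, 0 ≤ t →
        IntervalIntegrable (fun s => spow pU (e s k)) volume t (t+1) := by
      intro t ht
      exact (((continuous_spow pU hpU).comp_continuousOn (heck k)).mono (hsub t ht)).intervalIntegrable
    have hib : ∀ t : ℝ, 0 ≤ t →
        IntervalIntegrable (fun s => spow pF (vl s k)) volume t (t+1) := by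
      intro t ht
      exact (((continuous_spow pF hpF).comp_continuousOn (hvlck k)).mono (hsub t ht)).intervalIntegrable
    set Gk : ℝ → ℝ := fun t => ∫ s in t..(t+1), spow pU (e s k) with hGk_def
    set Ik : ℝ → ℝ := fun t => ∫ s in t..(t+1), spow pF (vl s k) with hIk_def
    have hftc : ∀ t, 0 ≤ t → Ks * Gk t = z t - z (t+1) - Dl * Ik t := by
      intro t ht
      have hii : IntervalIntegrable
          (fun s => -(Ks * spow pU (e s k) + Dl * spow pF (vl s k))) volume t (t+1) :=
        ((hintc.mono (hsub t ht)).intervalIntegrable).neg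
      have h := intervalIntegral.integral_eq_sub_of_hasDerivAt (f := z)
        (f' := fun s => -(Ks * spow pU (e s k) + Dl * spow pF (vl s k)))
        (fun x hx => hz' x (hsub t ht hx)) hii
      have hsplit : ∫ s in t..(t+1), -(Ks * spow pU (e s k) + Dl * spow pF (vl s k))
          = -(Ks * Gk t + Dl * Ik t) := by
        rw [intervalIntegral.integral_neg]
        congr 1
        rw [intervalIntegral.integral_add ((hia t ht).const_mul Ks) ((hib t ht).const_mul Dl),
          intervalIntegral.integral_const_mul, intervalIntegral.integral_const_mul]
      rw [hsplit] at h
      linarith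
    have hIk0 : Filter.Tendsto Ik Filter.atTop (nhds 0) := by
      apply tendsto_integral_window ((continuous_spow pF hpF).comp_continuousOn (hvlck k))
      have := ((continuous_spow pF hpF).continuousAt (x := 0)).tendsto.comp (hvlk k)
      simpa [spow_zero] using this
    have hz0 : Filter.Tendsto z Filter.atTop (nhds 0) := by
      have h1 : Filter.Tendsto (fun t => ∑ j, Ml k j * vl t j) Filter.atTop
          (nhds (∑ j : Fin n, Ml k j * 0)) := by
        apply tendsto_finset_sum
        intro j _
        exact (hvlk j).const_mul (Ml k j)
      simp only [mul_zero, Finset.sum_const_zero] at h1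
      apply h1.congr
      intro t
      simp [hz_def, Matrix.mulVec, dotProduct]
    have hz1 : Filter.Tendsto (fun t => z (t+1)) Filter.atTop (nhds 0) :=
      hz0.comp (tendsto_atTop_add_const_right _ 1 tendsto_id)
    have hGk0 : Filter.Tendsto Gk Filter.atTop (nhds 0) := by
      have hrhs : Filter.Tendsto (fun t => (z t - z (t+1) - Dl * Ik t) / Ks)
          Filter.atTop (nhds 0) := by
        have := ((hz0.sub hz1).sub (hIk0.const_mul Dl)).div_const Ks
        simpa using this
      apply hrhs.congr'
      filter_upwards [Filter.eventually_ge_atTop (0:ℝ)] with t ht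
      have := hftc t ht
      rw [div_eq_iff hKs.ne']
      linarith
    have hdiff : Filter.Tendsto (fun t => spow pU (e t k) - Gk t) Filter.atTop (nhds 0) := by
      rw [Metric.tendsto_atTop]
      intro ε hε
      have hKcomp : IsCompact (Icc (-(Re+1)) (Re+1)) := isCompact_Icc
      have hucont : UniformContinuousOn (spow pU) (Icc (-(Re+1)) (Re+1)) :=
        hKcomp.uniformContinuousOn_of_continuous ((continuous_spow pU hpU).continuousOn)
      rw [Metric.uniformContinuousOn_iff] at hucont
      obtain ⟨δ, hδ, hδ'⟩ := hucont (ε/2) (by linarith)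
      set δ0 : ℝ := min (δ/2) 1 with hδ0_def
      have hδ00 : 0 < δ0 := lt_min (by linarith) one_pos
      have hvv : Filter.Tendsto (fun s => vl s k - vr s k) Filter.atTop (nhds 0) := by
        simpa using ((hvlk k).sub (hvrk k))
      rw [Metric.tendsto_atTop] at hvv
      obtain ⟨T, hT⟩ := hvv δ0 hδ00
      refine ⟨max T 0, fun t ht => ?_⟩
      have ht0 : 0 ≤ t := le_trans (le_max_right _ _) ht
      have htT : T ≤ t := le_trans (le_max_left _ _) ht
      have hlip : ∀ s ∈ Icc t (t+1), |e s k - e t k| ≤ δ0 := by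
        intro s hs
        have hderiv : ∀ x ∈ Icc t (t+1), HasDerivWithinAt (fun τ => e τ k)
            (vl x k - vr x k) (Icc t (t+1)) x := by
          intro x hx
          have hx0 : 0 ≤ x := le_trans ht0 hx.1
          have h := hasDerivAt_component e (vl x - vr x) x (he x hx0) k
          have : (vl x - vr x) k = vl x k - vr x k := rfl
          rw [this] at h
          exact h.hasDerivWithinAt
        have hbnd : ∀ x ∈ Icc t (t+1), ‖vl x k - vr x k‖ ≤ δ0 := by
          intro x hx
          have hxT : T ≤ x := le_trans htT hx.1
          have := hT x hxT
          rw [Real.dist_eq, sub_zero] at this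
          rw [Real.norm_eq_abs]
          exact this.le
        have h := Convex.norm_image_sub_le_of_norm_hasDerivWithin_le hderiv hbnd
          (convex_Icc _ _) (left_mem_Icc.2 (by linarith : t ≤ t + 1)) hs
        rw [Real.norm_eq_abs, Real.norm_eq_abs] at h
        have habs : |s - t| ≤ 1 := by
          rw [abs_of_nonneg (by linarith [hs.1])]
          linarith [hs.2]
        nlinarith [hδ00.le]
      have hspow_close : ∀ s ∈ Set.uIoc t (t+1), |spow pU (e t k) - spow pU (e s k)| ≤ ε/2 := by
        intro s hsΙ
        have hs : s ∈ Icc t (t+1) := by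
          rw [Set.uIoc_of_le (by linarith : t ≤ t + 1)] at hsΙ
          exact Ioc_subset_Icc_self hsΙ
        have hs0 : 0 ≤ s := le_trans ht0 hs.1
        have hmem1 : e t k ∈ Icc (-(Re+1)) (Re+1) := by
          have := abs_le.1 (hE t ht0 k)
          constructor <;> [linarith [this.1]; linarith [this.2]]
        have hmem2 : e s k ∈ Icc (-(Re+1)) (Re+1) := by
          have := abs_le.1 (hE s hs0 k)
          constructor <;> [linarith [this.1]; linarith [this.2]]
        have hd : dist (e t k) (e s k) < δ := by
          rw [Real.dist_eq]
          have h1 := hlip s hs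
          rw [abs_sub_comm] at h1
          have h2 : δ0 ≤ δ/2 := min_le_left _ _
          linarith
        have := hδ' _ hmem1 _ hmem2 hd
        rw [Real.dist_eq] at this
        exact this.le
      have hconst : ∫ s in t..(t+1), spow pU (e t k) = spow pU (e t k) := by
        rw [intervalIntegral.integral_const]
        simp
      have hGkt : spow pU (e t k) - Gk t
          = ∫ s in t..(t+1), (spow pU (e t k) - spow pU (e s k)) := by
        rw [intervalIntegral.integral_sub intervalIntegrable_const (hia t ht0), hconst]
      rw [Real.dist_eq, sub_zero, hGkt]
      have hb := intervalIntegral.norm_integral_le_of_norm_le_const (C := ε/2)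
        (f := fun s => spow pU (e t k) - spow pU (e s k)) (a := t) (b := t+1)
        (fun x hx => by rw [Real.norm_eq_abs]; exact hspow_close x hx)
      rw [Real.norm_eq_abs] at hb
      calc |∫ s in t..(t+1), (spow pU (e t k) - spow pU (e s k))| ≤ ε/2 * |t+1-t| := hb
        _ ≤ ε/2 := by norm_num
        _ < ε := by linarith
    have hsp0 : Filter.Tendsto (fun t => spow pU (e t k)) Filter.atTop (nhds 0) := by
      have h := hdiff.add hGk0
      simp only [sub_add_cancel, add_zero] at h
      exact h
    have hcomp := ((continuous_spow pU⁻¹ (inv_pos.2 hpU)).continuousAt (x := 0)).tendsto.comp hsp0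
    refine Filter.Tendsto.congr (fun t => spow_inv_spow pU (e t k) hpU) ?_
    simpa [Function.comp_def, spow_zero] using hcomp
  -- assemble
  have hetend : Filter.Tendsto e Filter.atTop (nhds 0) := tendsto_pi_nhds.2 hek
  have hvltend : Filter.Tendsto vl Filter.atTop (nhds 0) := tendsto_pi_nhds.2 hvlk
  have hvrtend : Filter.Tendsto vr Filter.atTop (nhds 0) := tendsto_pi_nhds.2 hvrk
  exact hetend.prodMk_nhds (hvltend.prodMk_nhds hvrtend)

end Traj2
section Stab
variable {n : ℕ} {Ml Mr : Matrix (Fin n) (Fin n) ℝ} {Ks Dl Dr pU pF : ℝ}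

lemma Vval_pos (hMl : Ml.PosDef) (hMr : Mr.PosDef) (hKs : 0 < Ks) (hpU : 0 < pU)
    (x : (Fin n → ℝ) × (Fin n → ℝ) × (Fin n → ℝ)) (hx : x ≠ 0) :
    0 < Vval Ml Mr Ks pU x := by
  obtain ⟨cl, Cl, hcl, hCl, hqMl⟩ := quad_bounds Ml hMl
  obtain ⟨cr, Cr, hcr, hCr, hqMr⟩ := quad_bounds Mr hMr
  have h1 : (0:ℝ) ≤ (Ks / (pU + 1)) * ∑ k, |x.1 k| ^ (pU + 1) := by
    apply mul_nonneg (by positivity)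
    exact Finset.sum_nonneg fun k _ => Real.rpow_nonneg (abs_nonneg _) _
  have h2 : 0 ≤ x.2.1 ⬝ᵥ Ml *ᵥ x.2.1 := le_trans (by positivity) (hqMl x.2.1).1
  have h3 : 0 ≤ x.2.2 ⬝ᵥ Mr *ᵥ x.2.2 := le_trans (by positivity) (hqMr x.2.2).1
  have hcases : x.1 ≠ 0 ∨ x.2.1 ≠ 0 ∨ x.2.2 ≠ 0 := by
    by_contra hc
    push_neg at hc
    exact hx (Prod.ext hc.1 (Prod.ext hc.2.1 hc.2.2))
  unfold Vval
  rcases hcases with h|h|h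
  · obtain ⟨k, hk⟩ := Function.ne_iff.1 h
    have hpos : 0 < ∑ j, |x.1 j| ^ (pU + 1) := by
      apply Finset.sum_pos' (fun j _ => Real.rpow_nonneg (abs_nonneg _) _)
      exact ⟨k, Finset.mem_univ k, Real.rpow_pos_of_pos (abs_pos.2 hk) _⟩
    have : 0 < (Ks / (pU + 1)) * ∑ j, |x.1 j| ^ (pU + 1) :=
      mul_pos (by positivity) hpos
    nlinarith
  · have := hMl.dotProduct_mulVec_pos h
    rw [star_trivial] at this
    nlinarith
  · have := hMr.dotProduct_mulVec_pos h
    rw [star_trivial] at this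
    nlinarith

lemma Vval_zero (hpU : 0 < pU) :
    Vval (n := n) Ml Mr Ks pU 0 = 0 := by
  unfold Vval
  simp [Real.zero_rpow (by positivity : pU + 1 ≠ 0)]

lemma stability_lemma (hMl : Ml.PosDef) (hMr : Mr.PosDef)
    (hMl_symm : Mlᵀ = Ml) (hMr_symm : Mrᵀ = Mr)
    (hKs : 0 < Ks) (hDl : 0 < Dl) (hDr : 0 < Dr) (hpU : 0 < pU) (hpF : 0 < pF)
    (hn : 0 < n) (ε : ℝ) (hε : 0 < ε) :
    ∃ δ : ℝ, 0 < δ ∧ ∀ e vl vr : ℝ → (Fin n → ℝ),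
      IsSolHomC1 n Ml Mr Ks Dl Dr pU pF e vl vr →
      ‖(e 0, vl 0, vr 0)‖ < δ → ∀ t : ℝ, 0 ≤ t → ‖(e t, vl t, vr t)‖ < ε := by
  haveI : Nonempty (Fin n) := ⟨⟨0, hn⟩⟩
  have hVcont := continuous_Vval Ml Mr Ks pU hpU
  -- minimum of V on the sphere of radius ε
  have hSne : (Metric.sphere (0 : (Fin n → ℝ) × (Fin n → ℝ) × (Fin n → ℝ)) ε).Nonempty :=
    NormedSpace.sphere_nonempty.2 hε.le
  obtain ⟨z0, hz0S, hz0min⟩ :=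
    (isCompact_sphere (0 : (Fin n → ℝ) × (Fin n → ℝ) × (Fin n → ℝ)) ε).exists_isMinOn
      hSne hVcont.continuousOn
  set m : ℝ := Vval Ml Mr Ks pU z0 with hm_def
  have hz0ne : z0 ≠ 0 := by
    intro h0
    rw [mem_sphere_iff_norm, h0, sub_zero, norm_zero] at hz0S
    linarith
  have hm : 0 < m := Vval_pos hMl hMr hKs hpU z0 hz0ne
  -- continuity of V at 0 gives δ
  have hca : ContinuousAt (Vval Ml Mr Ks pU) 0 := hVcont.continuousAt
  rw [Metric.continuousAt_iff] at hca
  obtain ⟨δ, hδ, hδ'⟩ := hca m hm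
  refine ⟨min δ ε, lt_min hδ hε, ?_⟩
  intro e vl vr hsol h0 t ht
  have hmono := V_antitone hMl hMr hMl_symm hMr_symm hDl hDr hpU hpF hsol
  have hV0 : Vval Ml Mr Ks pU (e 0, vl 0, vr 0) < m := by
    have hd : dist ((e 0, vl 0, vr 0)) (0 : (Fin n → ℝ) × (Fin n → ℝ) × (Fin n → ℝ)) < δ := by
      rw [dist_zero_right]
      exact lt_of_lt_of_le h0 (min_le_left _ _)
    have := hδ' hd
    rw [Vval_zero hpU, dist_zero_right, Real.norm_eq_abs] at this
    exact lt_of_le_of_lt (le_abs_self _) this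
  by_contra hcon
  push_neg at hcon
  -- hcon : ε ≤ ‖(e t, vl t, vr t)‖
  have hnorm0 : ‖(e 0, vl 0, vr 0)‖ < ε := lt_of_lt_of_le h0 (min_le_right _ _)
  obtain ⟨he, hvl, hvr⟩ := hsol
  have hcont : ContinuousOn (fun s => ‖(e s, vl s, vr s)‖) (Icc 0 t) := by
    intro s hs
    have hs0 : 0 ≤ s := hs.1
    exact (((he s hs0).continuousAt.prodMk
      ((hvl s hs0).continuousAt.prodMk (hvr s hs0).continuousAt)).norm).continuousWithinAt
  have hIVT := intermediate_value_Icc ht hcont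
  have hεmem : ε ∈ Icc (‖(e 0, vl 0, vr 0)‖) (‖(e t, vl t, vr t)‖) := ⟨hnorm0.le, hcon⟩
  obtain ⟨τ, hτmem, hτ⟩ := hIVT hεmem
  have hτS : (e τ, vl τ, vr τ) ∈
      Metric.sphere (0 : (Fin n → ℝ) × (Fin n → ℝ) × (Fin n → ℝ)) ε := by
    rw [mem_sphere_iff_norm, sub_zero]
    exact hτ
  have h1 : m ≤ Vval Ml Mr Ks pU (e τ, vl τ, vr τ) := hz0min hτS
  have h2 : Vval Ml Mr Ks pU (e τ, vl τ, vr τ) ≤ Vval Ml Mr Ks pU (e 0, vl 0, vr 0) :=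
    hmono self_mem_Ici hτmem.1 hτmem.1
  linarith

end Stab
theorem stmt16 (n : ℕ) (Ml Mr : Matrix (Fin n) (Fin n) ℝ)
    (hMl : Ml.PosDef) (hMr : Mr.PosDef)
    (hMl_symm : Mlᵀ = Ml) (hMr_symm : Mrᵀ = Mr)
    (Ks Dl Dr : ℝ) (hKs : 0 < Ks) (hDl : 0 < Dl) (hDr : 0 < Dr)
    (r1 r2 : ℝ) (hr2 : 0 < r2) (hr12 : r2 < r1) (hr1 : r1 < 2 * r2)
    (pU pF : ℝ) (hpU : pU = (2 * r2 - r1) / r1) (hpF : pF = (2 * r2 - r1) / r2) :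
    -- Lyapunov stability of the origin
    (∀ ε : ℝ, 0 < ε → ∃ δ : ℝ, 0 < δ ∧
      ∀ e vl vr : ℝ → (Fin n → ℝ),
        IsSolHomC1 n Ml Mr Ks Dl Dr pU pF e vl vr →
        ‖(e 0, vl 0, vr 0)‖ < δ → ∀ t : ℝ, 0 ≤ t → ‖(e t, vl t, vr t)‖ < ε) ∧
    -- along every solution, V is nonincreasing and the solution converges to 0
    (∀ e vl vr : ℝ → (Fin n → ℝ),
      IsSolHomC1 n Ml Mr Ks Dl Dr pU pF e vl vr →
      ((∀ s t : ℝ, 0 ≤ s → s ≤ t →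
        (Ks / (pU + 1)) * (∑ k, |e t k| ^ (pU + 1))
            + (1 / 2 : ℝ) * (vl t ⬝ᵥ (Ml *ᵥ vl t)) + (1 / 2 : ℝ) * (vr t ⬝ᵥ (Mr *ᵥ vr t))
          ≤ (Ks / (pU + 1)) * (∑ k, |e s k| ^ (pU + 1))
            + (1 / 2 : ℝ) * (vl s ⬝ᵥ (Ml *ᵥ vl s)) + (1 / 2 : ℝ) * (vr s ⬝ᵥ (Mr *ᵥ vr s))) ∧
       Filter.Tendsto (fun t => (e t, vl t, vr t)) Filter.atTop
         (nhds (0, 0, 0)))) := by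
  have hr10 : 0 < r1 := lt_trans hr2 hr12
  have hpU0 : 0 < pU := by rw [hpU]; exact div_pos (by linarith) hr10
  have hpF0 : 0 < pF := by rw [hpF]; exact div_pos (by linarith) hr2
  constructor
  · intro ε hε
    rcases Nat.eq_zero_or_pos n with hn|hn
    · subst hn
      refine ⟨1, one_pos, fun e vl vr _ _ t _ => ?_⟩
      have h1 : (e t, vl t, vr t)
          = ((0 : Fin 0 → ℝ), (0 : Fin 0 → ℝ), (0 : Fin 0 → ℝ)) := Subsingleton.elim _ _
      rw [h1, show ((0 : Fin 0 → ℝ), (0 : Fin 0 → ℝ), (0 : Fin 0 → ℝ))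
        = (0 : (Fin 0 → ℝ) × (Fin 0 → ℝ) × (Fin 0 → ℝ)) from rfl, norm_zero]
      exact hε
    · exact stability_lemma hMl hMr hMl_symm hMr_symm hKs hDl hDr hpU0 hpF0 hn ε hε
  · intro e vl vr hsol
    refine ⟨?_, ?_⟩
    · intro s t hs hst
      exact V_antitone hMl hMr hMl_symm hMr_symm hDl hDr hpU0 hpF0 hsol hs (hs.trans hst) hst
    · exact trajectory_tendsto hMl hMr hMl_symm hMr_symm hKs hDl hDr hpU0 hpF0 hsol
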